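/- Let 𝒜, 𝓑 ∈ ℝ ∖ {0}, let ã, b̃ ∈ (−1/2, 1/2), and let x', y' ∈ ℝ be such that ℋ := x'² − 𝒜²/4 = y'² − 𝓑²/4 and ℋ < 0. Set x̃ = x'/𝒜 and ỹ = y'/𝓑. Then there exists m̃ ∈ ℝ satisfying (x'·m̃ + 𝒜ã/2)² + (y'·m̃ − 𝓑b̃/2)² = ℋ·(m̃² − 1/4) if and only if (x̃ỹ)² + 2ãb̃·(x̃ỹ) + (4ã² + 4b̃² − 1)/16 ≤ 0. -/

import Mathlib

open Set

theorem stmt11 (A B at' bt x' y' H : ℝ)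
    (hA : A ≠ 0) (hB : B ≠ 0)
    (hat : at' ∈ Ioo (-(1 / 2) : ℝ) (1 / 2)) (hbt : bt ∈ Ioo (-(1 / 2) : ℝ) (1 / 2))
    (hH1 : H = x' ^ 2 - A ^ 2 / 4) (hH2 : H = y' ^ 2 - B ^ 2 / 4) (hHneg : H < 0) :
    (∃ m : ℝ, (x' * m + A * at' / 2) ^ 2 + (y' * m - B * bt / 2) ^ 2 = H * (m ^ 2 - 1 / 4))
      ↔ ((x' / A) * (y' / B)) ^ 2 + 2 * at' * bt * ((x' / A) * (y' / B)) +
          (4 * at' ^ 2 + 4 * bt ^ 2 - 1) / 16 ≤ 0 := by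
  set P : ℝ := x' ^ 2 + y' ^ 2 - H with hPdef
  set Q : ℝ := x' * A * at' - y' * B * bt with hQdef
  set R : ℝ := A ^ 2 * at' ^ 2 / 4 + B ^ 2 * bt ^ 2 / 4 + H / 4 with hRdef
  set G : ℝ := ((x' / A) * (y' / B)) ^ 2 + 2 * at' * bt * ((x' / A) * (y' / B)) +
          (4 * at' ^ 2 + 4 * bt ^ 2 - 1) / 16 with hGdef
  have hPpos : 0 < P := by rw [hPdef]; nlinarith [sq_nonneg x', sq_nonneg y']
  have hP : P ≠ 0 := ne_of_gt hPpos
  have hABpos : 0 < A ^ 2 * B ^ 2 := by positivity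
  have hG16 : A ^ 2 * B ^ 2 * G = x' ^ 2 * y' ^ 2 + 2 * at' * bt * (x' * y' * A * B) +
      (4 * at' ^ 2 + 4 * bt ^ 2 - 1) * A ^ 2 * B ^ 2 / 16 := by
    rw [hGdef]; field_simp
  have key : discrim P Q R = -(A ^ 2 * B ^ 2 * G) := by
    rw [discrim, hPdef, hQdef, hRdef]
    linear_combination hG16 + (B ^ 2 * bt ^ 2 - B ^ 2 / 4) * hH1 +
      (A ^ 2 * at' ^ 2 - x' ^ 2 + H) * hH2
  constructor
  · rintro ⟨m, hm⟩
    have hq : P * (m * m) + Q * m + R = 0 := by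
      rw [hPdef, hQdef, hRdef]; linear_combination hm
    have hsq := discrim_eq_sq_of_quadratic_eq_zero hq
    rw [key] at hsq
    exact (mul_le_mul_iff_right₀ hABpos).mp
      (by simpa using (by linarith [sq_nonneg (2 * P * m + Q)] : A ^ 2 * B ^ 2 * G ≤ 0))
  · intro hG
    have hd : 0 ≤ discrim P Q R := by
      rw [key]
      have := mul_nonpos_of_nonneg_of_nonpos hABpos.le hG
      linarith
    obtain ⟨m, hm⟩ := exists_quadratic_eq_zero hP
      ⟨Real.sqrt (discrim P Q R), (Real.mul_self_sqrt hd).symm⟩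
    rw [hPdef, hQdef, hRdef] at hm
    exact ⟨m, by linear_combination hm⟩
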